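/- Let K be a commutative ring equipped with a family (d_i)_{i ∈ Δ} of derivations, and assume K is simple (its only Δ-ideals are (0) and K). Let C = {λ ∈ K : d_i λ = 0 for all i} be its ring of constants, and assume C is a field (this is automatic from simplicity). Let A be a commutative C-algebra, and equip A ⊗_C K with the family of derivations (D_i)_{i ∈ Δ} characterized by D_i(a ⊗ λ) = a ⊗ d_i(λ). Let i : A → A ⊗_C K, a ↦ a ⊗ 1. Then: (1) for every ideal I of A, the ideal of A ⊗_C K generated by i(I) is a Δ-ideal and i⁻¹(⟨i(I)⟩) = I; (2) for every Δ-ideal J of A ⊗_C K, the ideal generated by i(i⁻¹(J)) equals J. In other words, I ↦ ⟨i(I)⟩ and J ↦ i⁻¹(J) are mutually inverse bijections between the set of ideals of A and the set of Δ-ideals of A ⊗_C K. -/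

import Mathlib

open scoped TensorProduct

set_option synthInstance.maxHeartbeats 1000000
set_option maxHeartbeats 1000000

/-- The subring of constants of a commutative ring equipped with a family of
derivations. -/
def constants {K Δ : Type*} [CommRing K] (d : Δ → Derivation ℤ K K) : Subring K where
  carrier := {x : K | ∀ i, d i x = 0}
  zero_mem' := fun i => map_zero (d i)
  one_mem' := fun i => (d i).map_one_eq_zero
  add_mem' := fun ha hb i => by rw [map_add, ha i, hb i, add_zero]
  neg_mem' := fun ha i => by rw [map_neg, ha i, neg_zero]
  mul_mem' := fun {a b} ha hb i => by
    rw [(d i).leibniz, ha i, hb i, smul_zero, smul_zero, add_zero]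

/-- The canonical map `i : A → A ⊗_C K`, `a ↦ a ⊗ 1`. -/
noncomputable def inclLeft (C : Type*) [CommRing C] (A K : Type*) [CommRing A]
    [CommRing K] [Algebra C A] [Algebra C K] : A →+* A ⊗[C] K :=
  Algebra.TensorProduct.includeLeftRingHom

section Aux

variable {C A K : Type*} [Field C] [CommRing A] [CommRing K]
  [Algebra C A] [Algebra C K]

/-- Coordinates of `A ⊗[C] K` with respect to a basis of `A` over `C`. -/
noncomputable def coordEq {ι : Type*} (b : Module.Basis ι C A) :
    A ⊗[C] K ≃ₗ[C] (ι →₀ K) :=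
  letI := Classical.decEq ι
  (TensorProduct.congr b.repr (LinearEquiv.refl C K)).trans
    (TensorProduct.finsuppScalarLeft C K ι)

lemma coordEq_tmul {ι : Type*} (b : Module.Basis ι C A) (a : A) (x : K) (i : ι) :
    coordEq b (a ⊗ₜ[C] x) i = b.repr a i • x := by
  classical
  simp [coordEq]

lemma coordEq_symm_single {ι : Type*} (b : Module.Basis ι C A) (i : ι) (x : K) :
    (coordEq b).symm (Finsupp.single i x) = b i ⊗ₜ[C] x := by
  classical
  rw [LinearEquiv.symm_apply_eq]
  ext j
  rw [coordEq_tmul, Module.Basis.repr_self, Finsupp.single_apply, Finsupp.single_apply]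
  split_ifs <;> simp

lemma coordEq_symm_eq {ι : Type*} (b : Module.Basis ι C A) (f : ι →₀ K) :
    (coordEq b).symm f = ∑ i ∈ f.support, b i ⊗ₜ[C] f i := by
  conv_lhs => rw [← Finsupp.sum_single f]
  rw [Finsupp.sum, map_sum]
  exact Finset.sum_congr rfl fun i _ => coordEq_symm_single b i (f i)

lemma coordEq_reconstruct {ι : Type*} (b : Module.Basis ι C A) (z : A ⊗[C] K) :
    z = ∑ i ∈ (coordEq b z).support, b i ⊗ₜ[C] (coordEq b z) i := by
  conv_lhs => rw [← (coordEq b).symm_apply_apply z]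
  exact coordEq_symm_eq b _

lemma coordEq_mul_right {ι : Type*} (b : Module.Basis ι C A) (μ : K) (z : A ⊗[C] K) (i : ι) :
    coordEq b ((1 ⊗ₜ[C] μ) * z) i = μ * coordEq b z i := by
  induction z using TensorProduct.induction_on with
  | zero => simp
  | tmul a x =>
      rw [Algebra.TensorProduct.tmul_mul_tmul, one_mul, coordEq_tmul, coordEq_tmul,
        mul_smul_comm]
  | add u v hu hv =>
      rw [mul_add, map_add, Finsupp.add_apply, hu, hv, map_add, Finsupp.add_apply, mul_add]

variable {Δ : Type*}

lemma coordEq_D {ι : Type*} (b : Module.Basis ι C A)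
    (d : Δ → Derivation ℤ K K) (D : Δ → Derivation ℤ (A ⊗[C] K) (A ⊗[C] K))
    (hd0 : ∀ (c : C) i, d i (algebraMap C K c) = 0)
    (hD : ∀ i (a : A) (x : K), D i (a ⊗ₜ[C] x) = a ⊗ₜ[C] (d i x))
    (i : Δ) (z : A ⊗[C] K) (β : ι) :
    coordEq b (D i z) β = d i (coordEq b z β) := by
  induction z using TensorProduct.induction_on with
  | zero => simp
  | tmul a x =>
      rw [hD, coordEq_tmul, coordEq_tmul, Algebra.smul_def, Algebra.smul_def,
        Derivation.leibniz, hd0, smul_zero, add_zero, smul_eq_mul]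
  | add u v hu hv =>
      simp only [map_add, Finsupp.add_apply, hu, hv]

end Aux
section Aux2

universe uA

variable {C : Type*} {A : Type uA} {K : Type*} [Field C] [CommRing A] [CommRing K]
  [Algebra C A] [Algebra C K]

lemma exists_adapted (I : Ideal A) :
    ∃ (ι₁ ι₂ : Type uA) (b : Module.Basis (ι₁ ⊕ ι₂) C A),
      (∀ i, b (Sum.inl i) ∈ I) ∧ (∀ a : A, a ∈ I ↔ ∀ j, b.repr a (Sum.inr j) = 0) := by
  obtain ⟨W, hW⟩ := Submodule.exists_isCompl (Submodule.restrictScalars C (I : Submodule A A))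
  set I' := Submodule.restrictScalars C (I : Submodule A A) with hI'
  let e := Submodule.prodEquivOfIsCompl I' W hW
  let b1 := Module.Basis.ofVectorSpace C I'
  let b2 := Module.Basis.ofVectorSpace C W
  refine ⟨_, _, (b1.prod b2).map e, fun i => ?_, fun a => ?_⟩
  · rw [Module.Basis.map_apply]
    have : (b1.prod b2) (Sum.inl i) = ((b1 i : I'), (0 : W)) := by
      ext
      · exact congrArg _ (Module.Basis.prod_apply_inl_fst b1 b2 i)
      · exact congrArg _ (Module.Basis.prod_apply_inl_snd b1 b2 i)
    rw [this, Submodule.coe_prodEquivOfIsCompl']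
    simp; exact (b1 i).2
  · have hrepr : ∀ j, ((b1.prod b2).map e).repr a (Sum.inr j) = b2.repr ((e.symm a).2) j := by
      intro j
      rw [Module.Basis.map_repr]
      rfl
    constructor
    · intro ha j
      rw [hrepr]
      have : e.symm a = (⟨a, ha⟩, 0) :=
        Submodule.prodEquivOfIsCompl_symm_apply_left I' W hW ⟨a, ha⟩
      rw [this]
      simp
    · intro h
      have h2 : (e.symm a).2 = 0 := by
        apply b2.repr.injective
        ext j
        have := h j
        rw [hrepr] at this
        simpa using this
      have h3 : a = ((e.symm a).1 : A) + ((e.symm a).2 : A) := by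
        conv_lhs => rw [← e.apply_symm_apply a]
        rfl
      rw [h3, h2]
      simp; exact ((e.symm a).1).2

end Aux2
section Aux3

variable {C A K : Type*} [Field C] [CommRing A] [CommRing K]
  [Algebra C A] [Algebra C K]

lemma inclLeft_apply (a : A) : inclLeft C A K a = a ⊗ₜ[C] (1 : K) := rfl

lemma coord_mul_gen {ι₁ ι₂ : Type*} (I : Ideal A) (b : Module.Basis (ι₁ ⊕ ι₂) C A)
    (hb2 : ∀ a : A, a ∈ I ↔ ∀ j, b.repr a (Sum.inr j) = 0)
    (w : A ⊗[C] K) (a : A) (ha : a ∈ I) (μ : K) (j : ι₂) :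
    coordEq b (w * (a ⊗ₜ[C] μ)) (Sum.inr j) = 0 := by
  induction w using TensorProduct.induction_on with
  | zero => simp
  | tmul a' x' =>
      rw [Algebra.TensorProduct.tmul_mul_tmul, coordEq_tmul,
        (hb2 _).1 (I.mul_mem_left a' ha) j, zero_smul]
  | add u v hu hv =>
      rw [add_mul, map_add, Finsupp.add_apply, hu, hv, add_zero]

lemma mem_map_char {ι₁ ι₂ : Type*} (I : Ideal A) (b : Module.Basis (ι₁ ⊕ ι₂) C A)
    (hb1 : ∀ i, b (Sum.inl i) ∈ I)
    (hb2 : ∀ a : A, a ∈ I ↔ ∀ j, b.repr a (Sum.inr j) = 0)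
    (z : A ⊗[C] K) :
    z ∈ I.map (inclLeft C A K) ↔ ∀ j, coordEq b z (Sum.inr j) = 0 := by
  constructor
  · intro hz
    have hz' : z ∈ Ideal.span ((inclLeft C A K) '' I) := hz
    refine Submodule.span_induction
      (p := fun w _ => ∀ j, coordEq b w (Sum.inr j) = 0) ?_ ?_ ?_ ?_ hz'
    · rintro _ ⟨a, ha, rfl⟩ j
      rw [inclLeft_apply, coordEq_tmul, (hb2 _).1 ha j, zero_smul]
    · intro j; simp
    · intro u v _ _ hu hv j
      rw [map_add, Finsupp.add_apply, hu j, hv j, add_zero]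
    · intro r w _ hwp j
      have hw2 := coordEq_reconstruct b w
      rw [smul_eq_mul]
      conv_lhs => rw [hw2]
      rw [Finset.mul_sum, map_sum, Finsupp.finset_sum_apply]
      refine Finset.sum_eq_zero fun β hβ => ?_
      cases β with
      | inl i => exact coord_mul_gen I b hb2 r _ (hb1 i) _ j
      | inr j' => exact absurd (hwp j') (Finsupp.mem_support_iff.1 hβ)
  · intro h
    have hz2 := coordEq_reconstruct b z
    rw [hz2]
    refine Ideal.sum_mem _ fun β hβ => ?_
    cases β with
    | inl i =>
        have : b (Sum.inl i) ⊗ₜ[C] (coordEq b z (Sum.inl i)) =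
            (inclLeft C A K) (b (Sum.inl i)) * (1 ⊗ₜ[C] (coordEq b z (Sum.inl i))) := by
          rw [inclLeft_apply, Algebra.TensorProduct.tmul_mul_tmul, mul_one, one_mul]
        rw [this]
        exact Ideal.mul_mem_right _ _ (Ideal.mem_map_of_mem _ (hb1 i))
    | inr j => exact absurd (h j) (Finsupp.mem_support_iff.1 hβ)

lemma comap_map_aux (hinj : Function.Injective (algebraMap C K)) (I : Ideal A) :
    (I.map (inclLeft C A K)).comap (inclLeft C A K) = I := by
  obtain ⟨ι₁, ι₂, b, hb1, hb2⟩ := exists_adapted (C := C) I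
  refine le_antisymm ?_ Ideal.le_comap_map
  intro a ha
  rw [Ideal.mem_comap, mem_map_char I b hb1 hb2] at ha
  rw [hb2]
  intro j
  have h1 := ha j
  rw [inclLeft_apply, coordEq_tmul, Algebra.smul_def, mul_one] at h1
  exact hinj (by rw [h1, map_zero])

lemma map_stable {Δ : Type*} (D : Δ → Derivation ℤ (A ⊗[C] K) (A ⊗[C] K))
    (hD1 : ∀ i (a : A), D i (a ⊗ₜ[C] (1 : K)) = 0)
    (I : Ideal A) :
    ∀ i, ∀ x ∈ I.map (inclLeft C A K), D i x ∈ I.map (inclLeft C A K) := by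
  set M := I.map (inclLeft C A K) with hM
  let T : Ideal (A ⊗[C] K) :=
    { carrier := {x | x ∈ M ∧ ∀ i, D i x ∈ M}
      zero_mem' := ⟨M.zero_mem, fun i => by rw [map_zero]; exact M.zero_mem⟩
      add_mem' := fun hx hy => ⟨M.add_mem hx.1 hy.1, fun i => by
        rw [map_add]; exact M.add_mem (hx.2 i) (hy.2 i)⟩
      smul_mem' := fun r x hx => ⟨M.smul_mem r hx.1, fun i => by
        rw [smul_eq_mul, Derivation.leibniz, smul_eq_mul, smul_eq_mul]
        exact M.add_mem (Ideal.mul_mem_left _ _ (hx.2 i))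
          (Ideal.mul_mem_right _ _ hx.1)⟩ }
  have hle : M ≤ T := by
    rw [hM, Ideal.map_le_iff_le_comap]
    intro a ha
    rw [Ideal.mem_comap]
    exact ⟨Ideal.mem_map_of_mem _ ha, fun i => by
      rw [inclLeft_apply, hD1]; exact M.zero_mem⟩
  intro i x hx
  exact (hle hx).2 i

end Aux3
section Aux4

variable {C A K Δ : Type*} [Field C] [CommRing A] [CommRing K]
  [Algebra C A] [Algebra C K]

lemma map_comap_aux (d : Δ → Derivation ℤ K K)
    (hsimple : ∀ T : Ideal K, (∀ i, ∀ x ∈ T, d i x ∈ T) → T = ⊥ ∨ T = ⊤)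
    (hd0 : ∀ (c : C) i, d i (algebraMap C K c) = 0)
    (hconst : ∀ μ : K, (∀ i, d i μ = 0) → ∃ c : C, algebraMap C K c = μ)
    (D : Δ → Derivation ℤ (A ⊗[C] K) (A ⊗[C] K))
    (hD : ∀ i (a : A) (x : K), D i (a ⊗ₜ[C] x) = a ⊗ₜ[C] (d i x))
    (J : Ideal (A ⊗[C] K)) (hJ : ∀ i, ∀ x ∈ J, D i x ∈ J) :
    (J.comap (inclLeft C A K)).map (inclLeft C A K) = J := by
  classical
  set I0 := J.comap (inclLeft C A K) with hI0
  obtain ⟨ι₁, ι₂, b, hb1, hb2⟩ := exists_adapted (C := C) I0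
  set N := I0.map (inclLeft C A K) with hN
  have hNJ : N ≤ J := Ideal.map_comap_le
  refine le_antisymm hNJ ?_
  have key : ∀ n : ℕ, ∀ x ∈ J,
      ((coordEq b x).support.filter (fun β => β.isRight)).card = n → x ∈ N := by
    intro n
    induction n using Nat.strong_induction_on with
    | _ n IH =>
      intro x hx hcard
      by_cases h0 : ∀ j, coordEq b x (Sum.inr j) = 0
      · exact (mem_map_char I0 b hb1 hb2 x).2 h0
      push_neg at h0
      obtain ⟨j0, hj0⟩ := h0
      have hmem0 : (Sum.inr j0 : ι₁ ⊕ ι₂) ∈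
          (coordEq b x).support.filter (fun β => β.isRight) := by
        rw [Finset.mem_filter, Finsupp.mem_support_iff]
        exact ⟨hj0, rfl⟩
      -- the card estimate
      have hcard_lt : ∀ z : A ⊗[C] K,
          (coordEq b z).support ⊆ (coordEq b x).support →
          coordEq b z (Sum.inr j0) = 0 →
          ((coordEq b z).support.filter (fun β => β.isRight)).card < n := by
        intro z hsub hz0
        have hsub2 : (coordEq b z).support.filter (fun β => β.isRight) ⊆
            ((coordEq b x).support.filter (fun β => β.isRight)).erase (Sum.inr j0) := by
          intro β hβ
          rw [Finset.mem_filter] at hβ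
          rw [Finset.mem_erase, Finset.mem_filter]
          refine ⟨?_, hsub hβ.1, hβ.2⟩
          rintro rfl
          exact (Finsupp.mem_support_iff.1 hβ.1) hz0
        calc ((coordEq b z).support.filter (fun β => β.isRight)).card
            ≤ (((coordEq b x).support.filter (fun β => β.isRight)).erase (Sum.inr j0)).card :=
              Finset.card_le_card hsub2
          _ < n := by rw [← hcard]; exact Finset.card_erase_lt_of_mem hmem0
      -- the ideal of leading coefficients
      let T : Ideal K :=
        { carrier := {μ | ∃ z, z ∈ J ∧ (coordEq b z).support ⊆ (coordEq b x).support ∧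
            coordEq b z (Sum.inr j0) = μ}
          zero_mem' := ⟨0, J.zero_mem, by simp, by simp⟩
          add_mem' := by
            rintro μ ν ⟨z1, hz1, hs1, hc1⟩ ⟨z2, hz2, hs2, hc2⟩
            refine ⟨z1 + z2, J.add_mem hz1 hz2, ?_, by
              rw [map_add, Finsupp.add_apply, hc1, hc2]⟩
            rw [map_add]
            exact Finsupp.support_add.trans (Finset.union_subset hs1 hs2)
          smul_mem' := by
            rintro c μ ⟨z, hz, hs, hc⟩
            refine ⟨(1 ⊗ₜ[C] c) * z, J.mul_mem_left _ hz, ?_, by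
              rw [coordEq_mul_right, hc, smul_eq_mul]⟩
            intro β hβ
            rw [Finsupp.mem_support_iff, coordEq_mul_right] at hβ
            exact hs (Finsupp.mem_support_iff.2 fun h => hβ (by rw [h, mul_zero])) }
      have hTd : ∀ i, ∀ μ ∈ T, d i μ ∈ T := by
        rintro i μ ⟨z, hz, hs, hc⟩
        refine ⟨D i z, hJ i z hz, ?_, by rw [coordEq_D b d D hd0 hD, hc]⟩
        intro β hβ
        rw [Finsupp.mem_support_iff, coordEq_D b d D hd0 hD] at hβ
        exact hs (Finsupp.mem_support_iff.2 fun h => hβ (by rw [h, map_zero]))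
      have hTne : T ≠ ⊥ := by
        intro hbot
        have : coordEq b x (Sum.inr j0) ∈ T := ⟨x, hx, subset_rfl, rfl⟩
        rw [hbot, Ideal.mem_bot] at this
        exact hj0 this
      have hTtop : T = ⊤ := (hsimple T hTd).resolve_left hTne
      have hone : (1 : K) ∈ T := by rw [hTtop]; trivial
      obtain ⟨y, hyJ, hys, hyc⟩ := hone
      -- all derivatives of y lie in N
      have hDy : ∀ i, D i y ∈ N := by
        intro i
        have hsupp : (coordEq b (D i y)).support ⊆ (coordEq b x).support := by
          intro β hβ
          rw [Finsupp.mem_support_iff, coordEq_D b d D hd0 hD] at hβ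
          exact hys (Finsupp.mem_support_iff.2 fun h => hβ (by rw [h, map_zero]))
        have hz0 : coordEq b (D i y) (Sum.inr j0) = 0 := by
          rw [coordEq_D b d D hd0 hD, hyc, Derivation.map_one_eq_zero]
        exact IH _ (hcard_lt _ hsupp hz0) _ (hJ i y hyJ) rfl
      -- the inr-coordinates of y are constants
      have hyc' : ∀ j i, d i (coordEq b y (Sum.inr j)) = 0 := by
        intro j i
        rw [← coordEq_D b d D hd0 hD]
        exact ((mem_map_char I0 b hb1 hb2 _).1 (hDy i)) j
      choose cc hccp using fun j : ι₂ => hconst _ (hyc' j)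
      set g : ι₁ ⊕ ι₂ → A :=
        fun β => Sum.elim (fun _ => (0 : A)) (fun j => cc j • b (Sum.inr j)) β with hg
      set a : A := ∑ β ∈ (coordEq b y).support, g β with ha
      have hrepr : ∀ j, b.repr a (Sum.inr j) =
          if Sum.inr j ∈ (coordEq b y).support then cc j else 0 := by
        intro j
        rw [ha, map_sum, Finsupp.finset_sum_apply]
        have hpt : ∀ β, b.repr (g β) (Sum.inr j) =
            if β = Sum.inr j then cc j else 0 := by
          rintro (i | j')
          · simp [hg]
          · rw [hg]
            simp only [Sum.elim_inr, map_smul, Module.Basis.repr_self]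
            rw [Finsupp.smul_apply, Finsupp.single_apply]
            by_cases h : j' = j
            · subst h; simp
            · rw [if_neg (by simpa using h), if_neg (by simpa using h), smul_zero]
        rw [Finset.sum_congr rfl fun β _ => hpt β, Finset.sum_ite_eq']
      have h1 : ∀ j, coordEq b (y - a ⊗ₜ[C] (1 : K)) (Sum.inr j) = 0 := by
        intro j
        rw [map_sub, Finsupp.sub_apply, coordEq_tmul, hrepr j]
        by_cases hj : Sum.inr j ∈ (coordEq b y).support
        · rw [if_pos hj, Algebra.smul_def, mul_one, hccp j, sub_self]
        · rw [if_neg hj, zero_smul, sub_zero]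
          exact Finsupp.notMem_support_iff.1 hj
      have hyN : y ∈ N := by
        have h2 : y - a ⊗ₜ[C] (1 : K) ∈ N := (mem_map_char I0 b hb1 hb2 _).2 h1
        have h3 : a ⊗ₜ[C] (1 : K) ∈ J := by
          have h4 := J.sub_mem hyJ (hNJ h2)
          simpa using h4
        have h5 : a ∈ I0 := by
          rw [hI0, Ideal.mem_comap]
          exact h3
        have h6 : a ⊗ₜ[C] (1 : K) ∈ N := Ideal.mem_map_of_mem _ h5
        have h7 := N.add_mem h2 h6
        simpa using h7
      -- finish
      set x' : A ⊗[C] K := x - (1 ⊗ₜ[C] (coordEq b x (Sum.inr j0))) * y with hx'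
      have hx'J : x' ∈ J := J.sub_mem hx (J.mul_mem_left _ hyJ)
      have hx'supp : (coordEq b x').support ⊆ (coordEq b x).support := by
        intro β hβ
        by_contra hβx
        have hxb : coordEq b x β = 0 := Finsupp.notMem_support_iff.1 hβx
        have hyb : coordEq b y β = 0 :=
          Finsupp.notMem_support_iff.1 (fun h => hβx (hys h))
        rw [Finsupp.mem_support_iff, hx', map_sub, Finsupp.sub_apply, coordEq_mul_right,
          hxb, hyb, mul_zero, sub_zero] at hβ
        exact hβ rfl
      have hx'0 : coordEq b x' (Sum.inr j0) = 0 := by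
        rw [hx', map_sub, Finsupp.sub_apply, coordEq_mul_right, hyc, mul_one, sub_self]
      have hx'N : x' ∈ N := IH _ (hcard_lt _ hx'supp hx'0) _ hx'J rfl
      have hfin := N.add_mem hx'N
        (Ideal.mul_mem_left N (1 ⊗ₜ[C] (coordEq b x (Sum.inr j0))) hyN)
      have heq : x' + (1 ⊗ₜ[C] (coordEq b x (Sum.inr j0))) * y = x := by rw [hx']; ring
      rwa [heq] at hfin
  intro x hx
  exact key _ x hx rfl

end Aux4

/-- Let `K` be a simple `Δ`-ring with field of constants `C`, let `A` be a commutative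
`C`-algebra, and equip `A ⊗_C K` with the derivations `D i` characterized by
`D i (a ⊗ λ) = a ⊗ d i λ`. Then `I ↦ ⟨i(I)⟩` and `J ↦ i⁻¹(J)` are mutually inverse
bijections between the ideals of `A` and the `Δ`-ideals of `A ⊗_C K`: for every ideal
`I` of `A`, the ideal generated by `i(I)` is a `Δ`-ideal whose contraction is `I`; and
every `Δ`-ideal `J` of `A ⊗_C K` is generated by `i(i⁻¹(J))`. -/
theorem stmt_10 {K Δ : Type*} [CommRing K] (d : Δ → Derivation ℤ K K)
    (hsimple : ∀ I : Ideal K, (∀ i, ∀ x ∈ I, d i x ∈ I) → I = ⊥ ∨ I = ⊤)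
    (hC : IsField (constants d))
    (A : Type*) [CommRing A] [Algebra (constants d) A]
    (D : Δ → Derivation ℤ (A ⊗[constants d] K) (A ⊗[constants d] K))
    (hD : ∀ i (a : A) (c : K), D i (a ⊗ₜ c) = a ⊗ₜ[constants d] (d i c)) :
    (∀ I : Ideal A,
      (∀ i, ∀ x ∈ I.map (inclLeft (constants d) A K), D i x ∈ I.map (inclLeft (constants d) A K)) ∧
      (I.map (inclLeft (constants d) A K)).comap (inclLeft (constants d) A K) = I) ∧
    (∀ J : Ideal (A ⊗[constants d] K), (∀ i, ∀ x ∈ J, D i x ∈ J) →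
      (J.comap (inclLeft (constants d) A K)).map (inclLeft (constants d) A K) = J) := by
  letI : Field (constants d) := hC.toField
  have hd0 : ∀ (c : constants d) (i : Δ), d i (algebraMap (constants d) K c) = 0 :=
    fun c i => c.2 i
  have hconst : ∀ μ : K, (∀ i, d i μ = 0) →
      ∃ c : constants d, algebraMap (constants d) K c = μ :=
    fun μ h => ⟨⟨μ, h⟩, rfl⟩
  have hinj : Function.Injective (algebraMap (constants d) K) :=
    fun x y h => Subtype.ext h
  constructor
  · intro I
    exact ⟨map_stable D (fun i a => by
        rw [hD i a 1, Derivation.map_one_eq_zero, TensorProduct.tmul_zero]) I,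
      comap_map_aux hinj I⟩
  · intro J hJ
    exact map_comap_aux d hsimple hd0 hconst D hD J hJ
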